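/- For all natural numbers k and l, the following identity holds: Σ_{j=0}^{l} [l choose j]_q (-1)^j (a*_{k+j+1}/[k+j+1]_q) q^{j(j+1)/2 - l(k+j+1)} + Σ_{j=0}^{k} [k choose j]_q (-1)^j (a_{l+j+1}/[l+j+1]_q) q^{j(j+1)/2} = a_0 / ([k+l+1]_q · [k+l choose k]_q). -/

import Mathlib

open Finset

/-- The q-Pochhammer symbol `(a;q)_n = ∏_{j=0}^{n-1} (1 - a q^j)`. -/
def qPoch {F : Type*} [Field F] (q a : F) (n : ℕ) : F :=
  ∏ j ∈ Finset.range n, (1 - a * q ^ j)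

/-- The q-binomial coefficient `[n choose i]_q`, equal to 0 when `i > n`. -/
def qBinom {F : Type*} [Field F] (q : F) (n i : ℕ) : F :=
  if i ≤ n then qPoch q q n / (qPoch q q i * qPoch q q (n - i)) else 0

/-- The q-integer `[n]_q = (1-q^n)/(1-q)`. -/
def qInt {F : Type*} [Field F] (q : F) (n : ℕ) : F := (1 - q ^ n) / (1 - q)

/-- The q-dual sequence `a*_n = ∑_{i=0}^n (-1)^i [n choose i]_q q^{i(i-1)/2} a_i`. -/
def qDual {F : Type*} [Field F] (q : F) (a : ℕ → F) (n : ℕ) : F :=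
  ∑ i ∈ Finset.range (n + 1), (-1 : F) ^ i * qBinom q n i * q ^ (i.choose 2) * a i

section
variable {F : Type*} [Field F] {q : F}

lemma choose2succ (n : ℕ) : (n+1).choose 2 = n.choose 2 + n := by
  rw [Nat.choose_two_right, Nat.choose_two_right, Nat.triangle_succ]

lemma one_sub_pow_ne (hq : ∀ m : ℕ, 0 < m → q ^ m ≠ 1) {m : ℕ} (hm : 0 < m) :
    (1 : F) - q ^ m ≠ 0 :=
  sub_ne_zero.mpr (Ne.symm (hq m hm))

lemma qPoch_succ (a : F) (n : ℕ) : qPoch q a (n+1) = qPoch q a n * (1 - a * q ^ n) :=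
  Finset.prod_range_succ _ _

lemma qPoch_ne_zero (hq : ∀ m : ℕ, 0 < m → q ^ m ≠ 1) (n : ℕ) : qPoch q q n ≠ 0 := by
  rw [qPoch]
  apply Finset.prod_ne_zero_iff.mpr
  intro j _
  have : q * q ^ j = q ^ (j+1) := (pow_succ' q j).symm
  rw [this]
  exact one_sub_pow_ne hq (Nat.succ_pos j)

lemma qInt_ne_zero (hq : ∀ m : ℕ, 0 < m → q ^ m ≠ 1) {n : ℕ} (hn : 0 < n) :
    qInt q n ≠ 0 := by
  have h1 : (1:F) - q ≠ 0 := by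
    have := one_sub_pow_ne hq (Nat.one_pos); rwa [pow_one] at this
  exact div_ne_zero (one_sub_pow_ne hq hn) h1

lemma qBinom_of_le {n i : ℕ} (h : i ≤ n) :
    qBinom q n i = qPoch q q n / (qPoch q q i * qPoch q q (n - i)) := if_pos h

lemma qBinom_of_gt {n i : ℕ} (h : n < i) : qBinom q n i = 0 := if_neg (by omega)

lemma qPoch_zero (a : F) : qPoch q a 0 = 1 := by simp [qPoch]

lemma qBinom_zero (hq : ∀ m : ℕ, 0 < m → q ^ m ≠ 1) (n : ℕ) : qBinom q n 0 = 1 := by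
  rw [qBinom_of_le (Nat.zero_le n), qPoch_zero, Nat.sub_zero, one_mul,
    div_self (qPoch_ne_zero hq n)]

lemma qBinom_self (hq : ∀ m : ℕ, 0 < m → q ^ m ≠ 1) (n : ℕ) : qBinom q n n = 1 := by
  rw [qBinom_of_le (le_refl n), Nat.sub_self, qPoch_zero, mul_one,
    div_self (qPoch_ne_zero hq n)]

lemma pascal1 (hq : ∀ m : ℕ, 0 < m → q ^ m ≠ 1) (n i : ℕ) :
    qBinom q (n+1) (i+1) = q ^ (i+1) * qBinom q n (i+1) + qBinom q n i := by
  rcases lt_trichotomy i n with h | rfl | h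
  · obtain ⟨d, rfl⟩ : ∃ d, n = i + 1 + d := ⟨n - i - 1, by omega⟩
    rw [qBinom_of_le (by omega : i + 1 ≤ i + 1 + d + 1),
        qBinom_of_le (by omega : i + 1 ≤ i + 1 + d),
        qBinom_of_le (by omega : i ≤ i + 1 + d)]
    have h1 : i + 1 + d + 1 - (i + 1) = d + 1 := by omega
    have h2 : i + 1 + d - (i + 1) = d := by omega
    have h3 : i + 1 + d - i = d + 1 := by omega
    rw [h1, h2, h3]
    rw [qPoch_succ q (i+1+d), qPoch_succ q d, qPoch_succ q i]
    have P1 := qPoch_ne_zero hq (i+1+d)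
    have P2 := qPoch_ne_zero hq i
    have P3 := qPoch_ne_zero hq d
    have P4 := qPoch_ne_zero hq (i+1)
    have P5 := qPoch_ne_zero hq (d+1)
    rw [qPoch_succ q i] at P4
    rw [qPoch_succ q d] at P5
    have Q4 : (1:F) - q * q ^ i ≠ 0 := fun h => P4 (by rw [h, mul_zero])
    have Q5 : (1:F) - q * q ^ d ≠ 0 := fun h => P5 (by rw [h, mul_zero])
    field_simp
    ring
  · rw [qBinom_self hq, qBinom_self hq, qBinom_of_gt (by omega : i < i + 1), mul_zero,
      zero_add]
  · rw [qBinom_of_gt (by omega : n + 1 < i + 1), qBinom_of_gt (by omega : n < i + 1),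
      qBinom_of_gt h, mul_zero, zero_add]

lemma pascal2 (hq : ∀ m : ℕ, 0 < m → q ^ m ≠ 1) (n i : ℕ) :
    qBinom q (n+1) (i+1) = qBinom q n (i+1) + q ^ (n-i) * qBinom q n i := by
  rcases lt_trichotomy i n with h | rfl | h
  · obtain ⟨d, rfl⟩ : ∃ d, n = i + 1 + d := ⟨n - i - 1, by omega⟩
    rw [qBinom_of_le (by omega : i + 1 ≤ i + 1 + d + 1),
        qBinom_of_le (by omega : i + 1 ≤ i + 1 + d),
        qBinom_of_le (by omega : i ≤ i + 1 + d)]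
    have h1 : i + 1 + d + 1 - (i + 1) = d + 1 := by omega
    have h2 : i + 1 + d - (i + 1) = d := by omega
    have h3 : i + 1 + d - i = d + 1 := by omega
    rw [h1, h2, h3]
    rw [qPoch_succ q (i+1+d), qPoch_succ q d, qPoch_succ q i]
    have P1 := qPoch_ne_zero hq (i+1+d)
    have P2 := qPoch_ne_zero hq i
    have P3 := qPoch_ne_zero hq d
    have P4 := qPoch_ne_zero hq (i+1)
    have P5 := qPoch_ne_zero hq (d+1)
    rw [qPoch_succ q i] at P4
    rw [qPoch_succ q d] at P5
    have Q4 : (1:F) - q * q ^ i ≠ 0 := fun h => P4 (by rw [h, mul_zero])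
    have Q5 : (1:F) - q * q ^ d ≠ 0 := fun h => P5 (by rw [h, mul_zero])
    field_simp
    ring
  · rw [qBinom_self hq, qBinom_self hq, qBinom_of_gt (by omega : i < i + 1),
      Nat.sub_self, pow_zero, one_mul, zero_add]
  · rw [qBinom_of_gt (by omega : n + 1 < i + 1), qBinom_of_gt (by omega : n < i + 1),
      qBinom_of_gt h, mul_zero, add_zero]

lemma qBinom_mul_qInt (hq : ∀ m : ℕ, 0 < m → q ^ m ≠ 1) {n i : ℕ} (h : i ≤ n) :
    qBinom q (n+1) (i+1) * qInt q (i+1) = qInt q (n+1) * qBinom q n i := by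
  obtain ⟨d, rfl⟩ : ∃ d, n = i + d := ⟨n - i, by omega⟩
  rw [qBinom_of_le (by omega : i + 1 ≤ i + d + 1), qBinom_of_le (by omega : i ≤ i + d)]
  have h1 : i + d + 1 - (i + 1) = d := by omega
  have h2 : i + d - i = d := by omega
  rw [h1, h2, qInt, qInt]
  rw [qPoch_succ q (i+d), qPoch_succ q i]
  have P1 := qPoch_ne_zero hq (i+d)
  have P2 := qPoch_ne_zero hq i
  have P3 := qPoch_ne_zero hq d
  have h1q : (1:F) - q ≠ 0 := by
    have := one_sub_pow_ne hq (Nat.one_pos); rwa [pow_one] at this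
  have hii : (1:F) - q * q ^ i ≠ 0 := by
    have := one_sub_pow_ne hq (Nat.succ_pos i)
    rwa [pow_succ', ] at this
  field_simp
  ring

end

def S1x {F : Type*} [Field F] (q : F) (a : ℕ → F) (k l : ℕ) : F :=
  ∑ j ∈ Finset.range (l + 1), qBinom q l j * (-1 : F) ^ j *
      (qDual q a (k + j + 1) / qInt q (k + j + 1)) *
      q ^ (((j + 1).choose 2 : ℤ) - (l : ℤ) * ((k : ℤ) + j + 1))

def S2x {F : Type*} [Field F] (q : F) (a : ℕ → F) (k l : ℕ) : F :=
  ∑ j ∈ Finset.range (k + 1), qBinom q k j * (-1 : F) ^ j *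
      (a (l + j + 1) / qInt q (l + j + 1)) * q ^ ((j + 1).choose 2)

def Rx {F : Type*} [Field F] (q : F) (a : ℕ → F) (k l : ℕ) : F :=
  a 0 / (qInt q (k + l + 1) * qBinom q (k + l) k)

section main
variable {F : Type*} [Field F] {q : F}

lemma baseCase (hq : ∀ m : ℕ, 0 < m → q ^ m ≠ 1) (a : ℕ → F) (k : ℕ) :
    S1x q a k 0 + S2x q a k 0 = Rx q a k 0 := by
  have hk1 : qInt q (k+1) ≠ 0 := qInt_ne_zero hq (Nat.succ_pos k)
  rw [S1x, Rx, Finset.sum_range_one, qBinom_zero hq]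
  norm_num [qBinom_self hq]
  rw [qDual, Finset.sum_range_succ' _ (k+1), qBinom_zero hq]
  norm_num
  rw [add_div]
  have hS : S2x q a k 0 = -((∑ j ∈ Finset.range (k+1),
      (-1:F)^(j+1) * qBinom q (k+1) (j+1) * q^((j+1).choose 2) * a (j+1)) / qInt q (k+1)) := by
    rw [S2x, ← neg_div, ← Finset.sum_neg_distrib, Finset.sum_div]
    apply Finset.sum_congr rfl
    intro j hj
    have hjk : j ≤ k := by simpa [Nat.lt_succ_iff] using hj
    have h1 : qInt q (j+1) ≠ 0 := qInt_ne_zero hq (by omega)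
    have h2 : qInt q (k+1) ≠ 0 := qInt_ne_zero hq (by omega)
    have key := qBinom_mul_qInt (q := q) hq hjk
    simp only [Nat.zero_add]
    field_simp
    linear_combination (-(-1:F)^j * q^((j+1).choose 2) * a (j+1)) * key
  rw [hS]
  ring

lemma lemC (hq : ∀ m : ℕ, 0 < m → q ^ m ≠ 1) (a : ℕ → F) (k l : ℕ) :
    q ^ (k+1) * Rx q a k (l+1) = Rx q a k l - Rx q a (k+1) l := by
  have h1q : (1:F) - q ≠ 0 := by
    have := one_sub_pow_ne hq (Nat.one_pos); rwa [pow_one] at this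
  rw [Rx, Rx, Rx]
  have e1 : k + (l+1) + 1 = k + l + 2 := by omega
  have e2 : k + (l+1) = k + l + 1 := by omega
  have e3 : (k+1) + l + 1 = k + l + 2 := by omega
  have e4 : (k+1) + l = k + l + 1 := by omega
  rw [e1, e2, e3, e4]
  rw [qBinom_of_le (by omega : k ≤ k + l + 1), qBinom_of_le (by omega : k ≤ k + l),
      qBinom_of_le (by omega : k + 1 ≤ k + l + 1)]
  have s1 : k + l + 1 - k = l + 1 := by omega
  have s2 : k + l - k = l := by omega
  have s3 : k + l + 1 - (k + 1) = l := by omega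
  rw [s1, s2, s3, qInt, qInt]
  rw [qPoch_succ q (k+l), qPoch_succ q l, qPoch_succ q k]
  have P1 := qPoch_ne_zero hq (k+l)
  have P2 := qPoch_ne_zero hq k
  have P3 := qPoch_ne_zero hq l
  have h2 : (1:F) - q^(k+l+1) ≠ 0 := one_sub_pow_ne hq (by omega)
  have h3 : (1:F) - q^(k+l+2) ≠ 0 := one_sub_pow_ne hq (by omega)
  have h4 : (1:F) - q*q^(k+l) ≠ 0 := by rw [← pow_succ']; exact h2
  have h5 : (1:F) - q*q^l ≠ 0 := by rw [← pow_succ']; exact one_sub_pow_ne hq (by omega)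
  have h6 : (1:F) - q*q^k ≠ 0 := by rw [← pow_succ']; exact one_sub_pow_ne hq (by omega)
  field_simp
  ring

lemma lemB (hq : ∀ m : ℕ, 0 < m → q ^ m ≠ 1) (a : ℕ → F) (k l : ℕ) :
    q ^ (k+1) * S2x q a k (l+1) = S2x q a k l - S2x q a (k+1) l := by
  rw [S2x, S2x, S2x, Finset.mul_sum]
  rw [Finset.sum_range_succ'
    (fun j => qBinom q k j * (-1:F)^j * (a (l+j+1) / qInt q (l+j+1)) * q^((j+1).choose 2)) k]
  rw [Finset.sum_range_succ'
    (fun j => qBinom q (k+1) j * (-1:F)^j * (a (l+j+1) / qInt q (l+j+1)) * q^((j+1).choose 2)) (k+1)]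
  rw [qBinom_zero hq, qBinom_zero hq]
  have hext : ∑ j ∈ Finset.range k,
      qBinom q k (j + 1) * (-1:F) ^ (j + 1) * (a (l + (j + 1) + 1) / qInt q (l + (j + 1) + 1)) *
        q ^ (j + 1 + 1).choose 2
      = ∑ j ∈ Finset.range (k+1),
      qBinom q k (j + 1) * (-1:F) ^ (j + 1) * (a (l + (j + 1) + 1) / qInt q (l + (j + 1) + 1)) *
        q ^ (j + 1 + 1).choose 2 := by
    rw [Finset.sum_range_succ, qBinom_of_gt (by omega : k < k + 1)]
    ring
  rw [hext]
  have hcancel : ∀ x y z w : F, x = y - z → x = y + w - (z + w) := by intros x y z w h; rw [h]; ring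
  apply hcancel
  rw [← Finset.sum_sub_distrib]
  apply Finset.sum_congr rfl
  intro j hj
  have hjk : j ≤ k := by simpa [Nat.lt_succ_iff] using hj
  have harg : l + 1 + j + 1 = l + (j + 1) + 1 := by omega
  rw [harg, pascal2 hq k j]
  have hexp : (q:F) ^ (k + 1) * q ^ ((j + 1).choose 2) = q ^ (k - j) * q ^ ((j + 1 + 1).choose 2) := by
    rw [← pow_add, ← pow_add]
    congr 1
    have := choose2succ (j + 1)
    omega
  linear_combination ((-1:F)^j * (a (l + (j+1) + 1) / qInt q (l + (j+1) + 1)) * qBinom q k j) * hexp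

lemma lemA (hq0 : q ≠ 0) (hq : ∀ m : ℕ, 0 < m → q ^ m ≠ 1) (a : ℕ → F) (k l : ℕ) :
    q ^ (k+1) * S1x q a k (l+1) = S1x q a k l - S1x q a (k+1) l := by
  rw [S1x, S1x, S1x, Finset.mul_sum]
  rw [Finset.sum_range_succ'
    (fun j => q ^ (k+1) * (qBinom q (l+1) j * (-1:F)^j * (qDual q a (k + j + 1) / qInt q (k + j + 1)) *
      q ^ (((j + 1).choose 2 : ℤ) - ((l+1 : ℕ) : ℤ) * ((k : ℤ) + j + 1)))) (l+1)]
  rw [Finset.sum_range_succ'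
    (fun j => qBinom q l j * (-1:F)^j * (qDual q a (k + j + 1) / qInt q (k + j + 1)) *
      q ^ (((j + 1).choose 2 : ℤ) - (l : ℤ) * ((k : ℤ) + j + 1))) l]
  rw [qBinom_zero hq, qBinom_zero hq]
  have hext : ∑ j ∈ Finset.range l,
      qBinom q l (j + 1) * (-1:F) ^ (j + 1) * (qDual q a (k + (j + 1) + 1) / qInt q (k + (j + 1) + 1)) *
        q ^ ((((j + 1) + 1).choose 2 : ℤ) - (l : ℤ) * ((k : ℤ) + ((j+1 : ℕ) : ℤ) + 1))
      = ∑ j ∈ Finset.range (l + 1),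
      qBinom q l (j + 1) * (-1:F) ^ (j + 1) * (qDual q a (k + (j + 1) + 1) / qInt q (k + (j + 1) + 1)) *
        q ^ ((((j + 1) + 1).choose 2 : ℤ) - (l : ℤ) * ((k : ℤ) + ((j+1 : ℕ) : ℤ) + 1)) := by
    rw [Finset.sum_range_succ, qBinom_of_gt (by omega : l < l + 1)]
    ring
  rw [hext]
  have h0 : (q:F) ^ (k + 1) * q ^ ((((0:ℕ) + 1).choose 2 : ℤ) - ((l + 1 : ℕ) : ℤ) * ((k : ℤ) + ((0:ℕ) : ℤ) + 1))
      = q ^ ((((0:ℕ) + 1).choose 2 : ℤ) - (l : ℤ) * ((k : ℤ) + ((0:ℕ) : ℤ) + 1)) * q ^ ((k:ℤ) + 1 - ((k:ℤ)+1) * ((l:ℤ)+1) + (l:ℤ)*((k:ℤ)+1)) := by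
    rw [← zpow_natCast q (k + 1), ← zpow_add₀ hq0, ← zpow_add₀ hq0]
    congr 1
    push_cast
    ring
  have h0' : ((k:ℤ) + 1 - ((k:ℤ)+1) * ((l:ℤ)+1) + (l:ℤ)*((k:ℤ)+1)) = 0 := by ring
  rw [h0'] at h0
  rw [zpow_zero, mul_one] at h0
  have hsum : ∑ j ∈ Finset.range (l + 1),
      q ^ (k + 1) *
        (qBinom q (l + 1) (j + 1) * (-1:F) ^ (j + 1) *
            (qDual q a (k + (j + 1) + 1) / qInt q (k + (j + 1) + 1)) *
          q ^ ((((j + 1) + 1).choose 2 : ℤ) - ((l + 1 : ℕ) : ℤ) * ((k : ℤ) + ((j+1 : ℕ) : ℤ) + 1)))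
      = (∑ j ∈ Finset.range (l + 1),
      qBinom q l (j + 1) * (-1:F) ^ (j + 1) * (qDual q a (k + (j + 1) + 1) / qInt q (k + (j + 1) + 1)) *
        q ^ ((((j + 1) + 1).choose 2 : ℤ) - (l : ℤ) * ((k : ℤ) + ((j+1 : ℕ) : ℤ) + 1)))
      - ∑ j ∈ Finset.range (l + 1),
      qBinom q l j * (-1:F) ^ j * (qDual q a (k + 1 + j + 1) / qInt q (k + 1 + j + 1)) *
        q ^ (((j + 1).choose 2 : ℤ) - (l : ℤ) * (((k+1 : ℕ) : ℤ) + (j : ℤ) + 1)) := by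
    rw [← Finset.sum_sub_distrib]
    apply Finset.sum_congr rfl
    intro j hj
    have harg : k + (j + 1) + 1 = k + 1 + j + 1 := by omega
    rw [harg, pascal1 hq l j]
    have hz1 : (q:F) ^ (k + 1) * q ^ (j + 1) * q ^ ((((j + 1) + 1).choose 2 : ℤ) - ((l + 1 : ℕ) : ℤ) * ((k : ℤ) + ((j+1 : ℕ) : ℤ) + 1))
        = q ^ ((((j + 1) + 1).choose 2 : ℤ) - (l : ℤ) * ((k : ℤ) + ((j+1 : ℕ) : ℤ) + 1)) := by
      rw [← zpow_natCast q (k + 1), ← zpow_natCast q (j + 1), ← zpow_add₀ hq0, ← zpow_add₀ hq0]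
      congr 1
      push_cast
      ring
    have hz2 : (q:F) ^ (k + 1) * q ^ ((((j + 1) + 1).choose 2 : ℤ) - ((l + 1 : ℕ) : ℤ) * ((k : ℤ) + ((j+1 : ℕ) : ℤ) + 1))
        = q ^ (((j + 1).choose 2 : ℤ) - (l : ℤ) * (((k+1 : ℕ) : ℤ) + (j : ℤ) + 1)) := by
      rw [← zpow_natCast q (k + 1), ← zpow_add₀ hq0]
      congr 1
      push_cast [choose2succ]
      ring
    linear_combination (qBinom q l (j+1) * (-1:F)^(j+1) * (qDual q a (k + 1 + j + 1) / qInt q (k + 1 + j + 1))) * hz1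
      + (qBinom q l j * (-1:F)^(j+1) * (qDual q a (k + 1 + j + 1) / qInt q (k + 1 + j + 1))) * hz2
  rw [hsum]
  linear_combination (qDual q a (k + 0 + 1) / qInt q (k + 0 + 1)) * h0

lemma mainLem (hq0 : q ≠ 0) (hq : ∀ m : ℕ, 0 < m → q ^ m ≠ 1) (a : ℕ → F) :
    ∀ l k, S1x q a k l + S2x q a k l = Rx q a k l := by
  intro l
  induction l with
  | zero => intro k; exact baseCase hq a k
  | succ l ih =>
    intro k
    have hA := lemA hq0 hq a k l
    have hB := lemB hq a k l
    have hC := lemC hq a k l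
    have h1 := ih k
    have h2 := ih (k+1)
    apply mul_left_cancel₀ (pow_ne_zero (k+1) hq0)
    linear_combination hA + hB - hC + h1 - h2

end main

theorem stmt0 {F : Type*} [Field F] (q : F) (hq0 : q ≠ 0)
    (hq : ∀ m : ℕ, 0 < m → q ^ m ≠ 1) (a : ℕ → F) (k l : ℕ) :
    (∑ j ∈ Finset.range (l + 1), qBinom q l j * (-1 : F) ^ j *
        (qDual q a (k + j + 1) / qInt q (k + j + 1)) *
        q ^ (((j + 1).choose 2 : ℤ) - (l : ℤ) * ((k : ℤ) + j + 1))) +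
      (∑ j ∈ Finset.range (k + 1), qBinom q k j * (-1 : F) ^ j *
        (a (l + j + 1) / qInt q (l + j + 1)) * q ^ ((j + 1).choose 2)) =
    a 0 / (qInt q (k + l + 1) * qBinom q (k + l) k) := by
  exact mainLem hq0 hq a l k
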